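/- For every sequence (a_n)_{n≥1} of nonnegative real numbers with Σ_{n≥1} a_n ≤ 1 and every m ≥ 1, one has Σ_{n=1}^m H(a_n) ≤ 9·Σ_{n=1}^m log(n)·a_n + 40. -/

import Mathlib

/-- `H : [0,1] → ℝ`, `H 0 = 0` and `H x = x * log (1/x)` for `x ∈ (0,1]`. -/
noncomputable def Hfun (x : ℝ) : ℝ := if x = 0 then 0 else x * Real.log (1 / x)

lemma Hfun_le_two_sqrt (x : ℝ) (hx : 0 ≤ x) : Hfun x ≤ 2 * Real.sqrt x := by
  unfold Hfun
  split
  · positivity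
  · rename_i h
    have hx' : 0 < x := lt_of_le_of_ne hx (Ne.symm h)
    have hs : 0 < Real.sqrt x := Real.sqrt_pos.2 hx'
    have h1 : Real.log (1/x) = 2 * Real.log (1 / Real.sqrt x) := by
      rw [one_div, one_div, Real.log_inv, Real.log_inv, Real.log_sqrt hx]
      ring
    have h2 : Real.log (1 / Real.sqrt x) ≤ 1 / Real.sqrt x :=
      (Real.log_le_sub_one_of_pos (by positivity)).trans (by linarith)
    calc x * Real.log (1/x) = x * (2 * Real.log (1/Real.sqrt x)) := by rw [h1]
      _ ≤ x * (2 * (1/Real.sqrt x)) := by nlinarith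
      _ = 2 * (x / Real.sqrt x) := by ring
      _ = 2 * Real.sqrt x := by rw [Real.div_sqrt]

noncomputable def cseq (n : ℕ) : ℝ := if n = 1 then 2 else 2 / (((n : ℝ) - 1) * n)

lemma cseq_nonneg (n : ℕ) (hn : 1 ≤ n) : 0 ≤ cseq n := by
  unfold cseq
  split
  · norm_num
  · rename_i h
    have : (2 : ℕ) ≤ n := by omega
    have h1 : (1 : ℝ) ≤ (n : ℝ) - 1 := by
      have : (2 : ℝ) ≤ (n : ℝ) := by exact_mod_cast this
      linarith
    positivity

lemma cseq_sum (m : ℕ) (hm : 1 ≤ m) :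
    ∑ n ∈ Finset.Icc 1 m, cseq n ≤ 4 - 2 / m := by
  induction m with
  | zero => omega
  | succ k ih =>
    rcases Nat.eq_or_lt_of_le hm with h | h
    · simp [← h, cseq]; norm_num
    · have hk : 1 ≤ k := by omega
      rw [Finset.sum_Icc_succ_top (by omega)]
      have hck : cseq (k+1) = 2 / ((k : ℝ) * (k+1)) := by
        unfold cseq
        rw [if_neg (by omega)]
        push_cast
        ring_nf
      have hkpos : (0:ℝ) < k := by exact_mod_cast hk
      have : cseq (k+1) = 2/(k:ℝ) - 2/((k:ℝ)+1) := by
        rw [hck]; field_simp; ring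
      rw [this]
      have := ih hk
      push_cast
      linarith

theorem stmt2 (a : ℕ → ℝ) (ha : ∀ n : ℕ, 1 ≤ n → 0 ≤ a n)
    (hsum : ∀ m : ℕ, ∑ n ∈ Finset.Icc 1 m, a n ≤ 1)
    (m : ℕ) (hm : 1 ≤ m) :
    ∑ n ∈ Finset.Icc 1 m, Hfun (a n) ≤
      9 * ∑ n ∈ Finset.Icc 1 m, Real.log n * a n + 40 := by
  have ha1 : a 1 ≤ 1 := by have := hsum 1; simpa using this
  have key : ∀ n ∈ Finset.Icc 1 m, Hfun (a n) ≤ 9 * Real.log n * a n + cseq n := by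
    intro n hn
    simp only [Finset.mem_Icc] at hn
    have han : 0 ≤ a n := ha n hn.1
    rcases Nat.eq_or_lt_of_le hn.1 with h1 | h2
    · -- n = 1
      subst h1
      have : Hfun (a 1) ≤ 2 * Real.sqrt (a 1) := Hfun_le_two_sqrt _ han
      have hs : Real.sqrt (a 1) ≤ 1 := by
        rw [show (1:ℝ) = Real.sqrt 1 by simp]
        exact Real.sqrt_le_sqrt ha1
      have hc1 : cseq 1 = 2 := if_pos rfl
      rw [hc1]
      simp only [Nat.cast_one, Real.log_one]
      linarith
    · -- n ≥ 2
      have hn2 : 2 ≤ n := h2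
      have hnR : (2:ℝ) ≤ (n:ℝ) := by exact_mod_cast hn2
      have hnpos : (0:ℝ) < n := by linarith
      have hlogn : 0 ≤ Real.log n := Real.log_nonneg (by linarith)
      have hcn : cseq n = 2 / (((n:ℝ)-1) * n) := by
        unfold cseq; rw [if_neg (by omega)]
      by_cases hcase : a n ≤ 1 / (n:ℝ)^4
      · -- small case
        have h1 : Hfun (a n) ≤ 2 * Real.sqrt (a n) := Hfun_le_two_sqrt _ han
        have h2' : Real.sqrt (a n) ≤ 1 / (n:ℝ)^2 := by
          have : a n ≤ (1/(n:ℝ)^2)^2 := by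
            rw [div_pow, one_pow, ← pow_mul]
            simpa using hcase
          calc Real.sqrt (a n) ≤ Real.sqrt ((1/(n:ℝ)^2)^2) := Real.sqrt_le_sqrt this
            _ = 1/(n:ℝ)^2 := Real.sqrt_sq (by positivity)
        have h3 : 2 * (1/(n:ℝ)^2) ≤ cseq n := by
          rw [hcn, mul_one_div]
          have hd1 : (0:ℝ) < ((n:ℝ)-1) * n := by nlinarith
          rw [div_le_div_iff₀ (by positivity) hd1]
          nlinarith
        have h4 : 0 ≤ 9 * Real.log n * a n := by positivity
        linarith
      · -- big case
        push_neg at hcase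
        have hanpos : 0 < a n := lt_trans (by positivity) hcase
        have hH : Hfun (a n) = a n * Real.log (1 / a n) := by
          unfold Hfun; rw [if_neg (ne_of_gt hanpos)]
        have hlog : Real.log (1 / a n) ≤ 4 * Real.log n := by
          have : 1 / a n ≤ (n:ℝ)^4 := by
            rw [div_le_iff₀ hanpos]
            have := (div_lt_iff₀ (show (0:ℝ) < (n:ℝ)^4 by positivity)).mp hcase
            nlinarith
          calc Real.log (1/a n) ≤ Real.log ((n:ℝ)^4) :=
              Real.log_le_log (by positivity) this
            _ = 4 * Real.log n := by rw [Real.log_pow]; push_cast; ring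
        have h5 : Hfun (a n) ≤ 4 * Real.log n * a n := by
          rw [hH]
          nlinarith
        have h6 : 0 ≤ cseq n := cseq_nonneg n hn.1
        nlinarith
  calc ∑ n ∈ Finset.Icc 1 m, Hfun (a n)
      ≤ ∑ n ∈ Finset.Icc 1 m, (9 * Real.log n * a n + cseq n) :=
        Finset.sum_le_sum key
    _ = 9 * ∑ n ∈ Finset.Icc 1 m, Real.log n * a n + ∑ n ∈ Finset.Icc 1 m, cseq n := by
        rw [Finset.sum_add_distrib, Finset.mul_sum]
        congr 1
        exact Finset.sum_congr rfl (fun n _ => by ring)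
    _ ≤ 9 * ∑ n ∈ Finset.Icc 1 m, Real.log n * a n + 40 := by
        have h := cseq_sum m hm
        have hmpos : (0:ℝ) < m := by exact_mod_cast hm
        have : (0:ℝ) < 2 / m := by positivity
        linarith
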